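/- There exists a constant C > 0 such that for all r > 0, α₁ ∈ (0,1), all z = (x,y,t) with ‖z‖ ≤ θr, t ≤ 0, and all ζ = (ξ,η,τ) with |ξ| ≤ r, |η| ≤ 8r³ and τ ≤ −(α₁/2)r², one has Γ(z,ζ) ≥ C(α₁,θ) r⁻⁴, where Γ is the Kolmogorov fundamental solution. -/

import Mathlib

open Real

/-- Fundamental solution with pole at ζ = (ξ,η,τ). -/
noncomputable def kolGammaP (z ζ : ℝ × ℝ × ℝ) : ℝ :=
  if ζ.2.2 < z.2.2 then
    (Real.sqrt 3 / (2 * π * (z.2.2 - ζ.2.2) ^ 2)) *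
      Real.exp (-(z.1 ^ 2 + z.1 * ζ.1 + ζ.1 ^ 2) / (z.2.2 - ζ.2.2)
        - 3 * (z.1 + ζ.1) * (z.2.1 - ζ.2.1) / (z.2.2 - ζ.2.2) ^ 2
        - 3 * (z.2.1 - ζ.2.1) ^ 2 / (z.2.2 - ζ.2.2) ^ 3)
  else 0

lemma aux_div_bound {A N s d : ℝ} (h1 : -N ≤ A) (h2 : A ≤ N) (hd : 0 < d) (hds : d ≤ s) :
    -(N/d) ≤ A/s ∧ A/s ≤ N/d := by
  have hN : 0 ≤ N := by linarith
  refine ⟨?_, div_le_div₀ hN h2 hd hds⟩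
  have h := div_le_div₀ hN (by linarith : -A ≤ N) hd hds
  rw [neg_div] at h
  linarith

set_option maxHeartbeats 1000000 in
/-- Lower bound for the fundamental solution: for `z` in the intrinsic ball of radius `θr`
with `t ≤ 0` and `ζ` in the cylinder `|ξ| ≤ r`, `|η| ≤ 8r³`, `−α₁r² ≤ τ ≤ −(α₁/2)r²`,
one has `Γ(z,ζ) ≥ C r⁻⁴` with `C = C(α₁, θ) > 0`. -/
theorem kolGamma_lower_bound (θ α₁ : ℝ) (hθ : θ ∈ Set.Ioo (0 : ℝ) 1)
    (hα₁ : α₁ ∈ Set.Ioo (0 : ℝ) 1) (hθα : θ ^ 2 < α₁ / 2) :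
    ∃ C : ℝ, 0 < C ∧ ∀ r : ℝ, 0 < r → ∀ z ζ : ℝ × ℝ × ℝ,
      z.1 ^ 2 / (θ * r) ^ 2 + z.2.1 ^ 2 / (θ * r) ^ 6 + z.2.2 ^ 2 / (θ * r) ^ 4 ≤ 1 →
      z.2.2 ≤ 0 →
      |ζ.1| ≤ r → |ζ.2.1| ≤ 8 * r ^ 3 →
      -α₁ * r ^ 2 ≤ ζ.2.2 → ζ.2.2 ≤ -(α₁ / 2) * r ^ 2 →
      C * r ^ (-4 : ℤ) ≤ kolGammaP z ζ := by
  obtain ⟨hθ0, hθ1⟩ := hθ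
  obtain ⟨hα0, hα1⟩ := hα₁
  set c : ℝ := α₁ / 2 - θ ^ 2 with hc
  have hc0 : 0 < c := by simp only [hc]; linarith
  clear_value c
  refine ⟨Real.sqrt 3 / (2 * π) * Real.exp (-(3/c + 54/c^2 + 243/c^3)), by positivity, ?_⟩
  rintro r hr ⟨x, y, t⟩ ⟨ξ, η, τ⟩ hball ht hξ hη hτ1 hτ2
  dsimp only at hball ht hξ hη hτ1 hτ2
  have hθr : 0 < θ * r := mul_pos hθ0 hr
  have hy0 : 0 ≤ y ^ 2 / (θ * r) ^ 6 := by positivity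
  have ht0 : 0 ≤ t ^ 2 / (θ * r) ^ 4 := by positivity
  have hx0 : 0 ≤ x ^ 2 / (θ * r) ^ 2 := by positivity
  have hx2 : x ^ 2 ≤ (θ * r) ^ 2 := (div_le_one (by positivity)).mp (by linarith)
  have hy2 : y ^ 2 ≤ (θ * r) ^ 6 := (div_le_one (by positivity)).mp (by linarith)
  have ht2 : t ^ 2 ≤ (θ * r) ^ 4 := (div_le_one (by positivity)).mp (by linarith)
  have hθrr : θ * r ≤ r := by
    have := mul_le_mul_of_nonneg_right hθ1.le hr.le
    linarith
  have hx2r : x ^ 2 ≤ r ^ 2 := hx2.trans (pow_le_pow_left₀ hθr.le hθrr 2)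
  have hx_r : |x| ≤ r := abs_le_of_sq_le_sq hx2r hr.le
  have hy2' : y ^ 2 ≤ (r ^ 3) ^ 2 := by
    calc y ^ 2 ≤ (θ * r) ^ 6 := hy2
      _ ≤ r ^ 6 := pow_le_pow_left₀ hθr.le hθrr 6
      _ = (r ^ 3) ^ 2 := by ring
  have hy_r : |y| ≤ r ^ 3 := abs_le_of_sq_le_sq hy2' (by positivity)
  have ht_lb : -(θ ^ 2 * r ^ 2) ≤ t := by
    have h4 : t ^ 2 ≤ (θ ^ 2 * r ^ 2) ^ 2 := by
      calc t ^ 2 ≤ (θ * r) ^ 4 := ht2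
        _ = (θ ^ 2 * r ^ 2) ^ 2 := by ring
    exact (abs_le_of_sq_le_sq' h4 (by positivity)).1
  have hs_lb : c * r ^ 2 ≤ t - τ := by
    have hceq : c * r ^ 2 = α₁ / 2 * r ^ 2 - θ ^ 2 * r ^ 2 := by rw [hc]; ring
    linarith [hceq, ht_lb, hτ2]
  have hcr2 : 0 < c * r ^ 2 := by positivity
  have hs0 : 0 < t - τ := lt_of_lt_of_le hcr2 hs_lb
  have hs_ub : t - τ ≤ r ^ 2 := by
    have h6 : α₁ * r ^ 2 ≤ 1 * r ^ 2 := mul_le_mul_of_nonneg_right hα1.le (sq_nonneg r)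
    linarith
  -- bounds on pieces
  have hξ2 : ξ ^ 2 ≤ r ^ 2 := by
    rw [← sq_abs]; exact pow_le_pow_left₀ (abs_nonneg ξ) hξ 2
  have hxξ : x * ξ ≤ r ^ 2 := by
    calc x * ξ ≤ |x * ξ| := le_abs_self _
      _ = |x| * |ξ| := abs_mul x ξ
      _ ≤ r * r := mul_le_mul hx_r hξ (abs_nonneg ξ) hr.le
      _ = r ^ 2 := by ring
  have e1 := aux_div_bound (A := x ^ 2 + x * ξ + ξ ^ 2) (N := 3 * r ^ 2) (d := c * r ^ 2)
      (s := t - τ) (by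
        have h7 := sq_nonneg (x + ξ)
        have h8 := sq_nonneg x
        have h9 := sq_nonneg ξ
        have h10 : (0:ℝ) ≤ 3 * r ^ 2 := by positivity
        linarith)
      (by linarith) hcr2 hs_lb
  have hconv1 : 3 * r ^ 2 / (c * r ^ 2) = 3 / c := by field_simp
  have h1 : (x ^ 2 + x * ξ + ξ ^ 2) / (t - τ) ≤ 3 / c := hconv1 ▸ e1.2
  have hsum : |x + ξ| ≤ 2 * r := (abs_add_le x ξ).trans (by linarith)
  have hdiff : |y - η| ≤ 9 * r ^ 3 := (abs_sub y η).trans (by linarith)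
  have hA2 : |3 * (x + ξ) * (y - η)| ≤ 54 * r ^ 4 := by
    rw [abs_mul, abs_mul]
    calc |(3 : ℝ)| * |x + ξ| * |y - η| ≤ 3 * (2 * r) * (9 * r ^ 3) := by
          rw [abs_of_pos (by norm_num : (0:ℝ) < 3)]
          gcongr
      _ = 54 * r ^ 4 := by ring
  have hA2' := abs_le.mp hA2
  have hds2 : c ^ 2 * r ^ 4 ≤ (t - τ) ^ 2 := by
    calc c ^ 2 * r ^ 4 = (c * r ^ 2) ^ 2 := by ring
      _ ≤ (t - τ) ^ 2 := pow_le_pow_left₀ hcr2.le hs_lb 2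
  have e2 := aux_div_bound (A := 3 * (x + ξ) * (y - η)) (N := 54 * r ^ 4)
      (d := c ^ 2 * r ^ 4) (s := (t - τ) ^ 2) hA2'.1 hA2'.2 (by positivity) hds2
  have hconv2 : 54 * r ^ 4 / (c ^ 2 * r ^ 4) = 54 / c ^ 2 := by field_simp
  have h2 : -(54 / c ^ 2) ≤ 3 * (x + ξ) * (y - η) / (t - τ) ^ 2 := by
    rw [← hconv2]; exact e2.1
  have hds3 : c ^ 3 * r ^ 6 ≤ (t - τ) ^ 3 := by
    calc c ^ 3 * r ^ 6 = (c * r ^ 2) ^ 3 := by ring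
      _ ≤ (t - τ) ^ 3 := pow_le_pow_left₀ hcr2.le hs_lb 3
  have hA3 : 3 * (y - η) ^ 2 ≤ 243 * r ^ 6 := by
    have h5 : (y - η) ^ 2 ≤ (9 * r ^ 3) ^ 2 := by
      rw [← sq_abs]; exact pow_le_pow_left₀ (abs_nonneg _) hdiff 2
    linarith [h5]
  have e3 := aux_div_bound (A := 3 * (y - η) ^ 2) (N := 243 * r ^ 6)
      (d := c ^ 3 * r ^ 6) (s := (t - τ) ^ 3)
      (by
        have h11 := sq_nonneg (y - η)
        have h12 : (0:ℝ) ≤ 243 * r ^ 6 := by positivity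
        linarith) hA3 (by positivity) hds3
  have hconv3 : 243 * r ^ 6 / (c ^ 3 * r ^ 6) = 243 / c ^ 3 := by field_simp
  have h3 : 3 * (y - η) ^ 2 / (t - τ) ^ 3 ≤ 243 / c ^ 3 := hconv3 ▸ e3.2
  have hE : -(3/c + 54/c^2 + 243/c^3) ≤
      -(x ^ 2 + x * ξ + ξ ^ 2) / (t - τ) - 3 * (x + ξ) * (y - η) / (t - τ) ^ 2
        - 3 * (y - η) ^ 2 / (t - τ) ^ 3 := by
    rw [neg_div]
    linarith
  have hcond : τ < t := by linarith
  rw [kolGammaP, if_pos hcond]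
  dsimp only
  have hr4 : r ^ (-4 : ℤ) = (r ^ 4)⁻¹ := by
    rw [zpow_neg, zpow_ofNat]
  have hs2r4 : (t - τ) ^ 2 ≤ r ^ 4 := by
    calc (t - τ) ^ 2 ≤ (r ^ 2) ^ 2 := pow_le_pow_left₀ hs0.le hs_ub 2
      _ = r ^ 4 := by ring
  calc Real.sqrt 3 / (2 * π) * Real.exp (-(3/c + 54/c^2 + 243/c^3)) * r ^ (-4 : ℤ)
      = Real.sqrt 3 / (2 * π * r ^ 4) * Real.exp (-(3/c + 54/c^2 + 243/c^3)) := by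
        rw [hr4]; ring
    _ ≤ Real.sqrt 3 / (2 * π * (t - τ) ^ 2) * Real.exp (-(3/c + 54/c^2 + 243/c^3)) := by
        gcongr
    _ ≤ Real.sqrt 3 / (2 * π * (t - τ) ^ 2) *
          Real.exp (-(x ^ 2 + x * ξ + ξ ^ 2) / (t - τ)
            - 3 * (x + ξ) * (y - η) / (t - τ) ^ 2
            - 3 * (y - η) ^ 2 / (t - τ) ^ 3) := by
        gcongr
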